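/- arXiv:1910.02937 — 4 statements merged into one kernel-verified Lean document; each statement's English description precedes it below -/
import Mathlib

section
/- Let m ≥ 1, let W ⊆ ℝ^m be a linear subspace, let τ̃ ∈ ℝ^m, and let Φ : ℝ^m → ℝ^m be a linear map satisfying Φ τ̃ = 0 and Φ w = w for every w ∈ W. Let p ≥ 0, Δt > 0, and suppose Ũ, Ẽ ∈ ℝ^m satisfy: (i) there exists w ∈ W with ‖Ũ − w‖ ≤ C₁·Δt^{p+2}; (ii) Ẽ = α·Δt^{p+1}·τ̃ + r with ‖r‖ ≤ C₂·Δt^{p+2} for some real α. Then ‖Φ(Ũ + Ẽ) − Ũ‖ ≤ ((1 + ‖Φ‖)·C₁ + ‖Φ‖·C₂)·Δt^{p+2}, where ‖Φ‖ is the operator norm. In particular, the post-processed numerical solution Φ(Ũ + Ẽ) approximates Ũ to order Δt^{p+2}. -/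
/-- **Post-processing estimate (equations (3.24)–(3.27)).**
If the filter `Φ` annihilates the concatenated truncation direction `τ̃` and fixes every
element of the subspace `W` (the projected polynomials of degree ≤ p+1), the exact solution
vector `Ut` is within `C₁Δt^{p+2}` of `W`, and the error `Et` is a multiple of `Δt^{p+1}τ̃`
up to an `O(Δt^{p+2})` remainder, then the post-processed numerical solution satisfies
`‖Φ(Ut + Et) - Ut‖ ≤ ((1 + ‖Φ‖)C₁ + ‖Φ‖C₂)·Δt^{p+2}`. -/
theorem postprocessing_estimate (m : ℕ) (hm : 1 ≤ m)
    (W : Submodule ℝ (Fin m → ℝ)) (τ : Fin m → ℝ)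
    (Φ : (Fin m → ℝ) →L[ℝ] (Fin m → ℝ))
    (hτ : Φ τ = 0) (hW : ∀ w ∈ W, Φ w = w)
    (p : ℕ) (Δt : ℝ) (hΔt : 0 < Δt)
    (Ut Et : Fin m → ℝ) (C₁ C₂ α : ℝ)
    (h1 : ∃ w ∈ W, ‖Ut - w‖ ≤ C₁ * Δt ^ (p + 2))
    (h2 : ∃ r : Fin m → ℝ, Et = (α * Δt ^ (p + 1)) • τ + r ∧ ‖r‖ ≤ C₂ * Δt ^ (p + 2)) :
    ‖Φ (Ut + Et) - Ut‖ ≤ ((1 + ‖Φ‖) * C₁ + ‖Φ‖ * C₂) * Δt ^ (p + 2) := by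
  obtain ⟨w, hwW, hw⟩ := h1
  obtain ⟨r, hr, hrn⟩ := h2
  have key : Φ (Ut + Et) - Ut = Φ (Ut - w) + (w - Ut) + Φ r := by
    have h1 : Φ (Ut + Et) = Φ Ut + Φ r := by
      rw [hr, map_add, map_add, map_smul, hτ, smul_zero, zero_add]
    rw [h1, map_sub, hW w hwW]
    abel
  rw [key]
  have hΦ1 : ‖Φ (Ut - w)‖ ≤ ‖Φ‖ * (C₁ * Δt ^ (p + 2)) :=
    le_trans (Φ.le_opNorm _) (by
      exact mul_le_mul_of_nonneg_left hw (norm_nonneg Φ))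
  have hΦ2 : ‖Φ r‖ ≤ ‖Φ‖ * (C₂ * Δt ^ (p + 2)) :=
    le_trans (Φ.le_opNorm _) (mul_le_mul_of_nonneg_left hrn (norm_nonneg Φ))
  have h3 : ‖w - Ut‖ ≤ C₁ * Δt ^ (p + 2) := by rwa [norm_sub_rev] at hw
  calc ‖Φ (Ut - w) + (w - Ut) + Φ r‖ ≤ ‖Φ (Ut - w) + (w - Ut)‖ + ‖Φ r‖ := norm_add_le _ _
    _ ≤ (‖Φ (Ut - w)‖ + ‖w - Ut‖) + ‖Φ r‖ := by gcongr; exact norm_add_le _ _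
    _ ≤ (‖Φ‖ * (C₁ * Δt ^ (p + 2)) + C₁ * Δt ^ (p + 2)) + ‖Φ‖ * (C₂ * Δt ^ (p + 2)) := by
        gcongr
    _ = ((1 + ‖Φ‖) * C₁ + ‖Φ‖ * C₂) * Δt ^ (p + 2) := by ring
end

section
/- Let s ≥ 1, let D, A, R be s×s real matrices and v₁, v₂ ∈ ℝ^s, and assume D² = D, D v₁ = 0, D v₂ = 0, and D(A + R)v₁ = 0. For real numbers h, f₁, f₂, α, β define the matrices Q_i = D + h·f_i·(R D + A) for i = 1,2, and the vector w = α v₁ + h(β v₂ + α f₁ R v₁). Then, writing w₁ = β v₂ + α f₁ R v₁, the exact identity Q₂ Q₁ w = h²·[ (f₂ (RD + A) D + f₁ D (RD + A)) w₁ + α f₁ f₂ (RD + A)² v₁ ] + h³· f₁ f₂ (RD + A)² w₁ holds; in particular the coefficients of h⁰ and h¹ in the expansion of Q₂ Q₁ w vanish, so Q₂ Q₁ w = O(h²) as h → 0. -/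
/-- **Algebraic core of the Appendix A error analysis.**
If `D² = D`, `Dv₁ = 0`, `Dv₂ = 0` and `D(A+R)v₁ = 0` (the EIS+ conditions), then with
`B = RD + A`, `Qᵢ = D + h fᵢ B`, `w₁ = β v₂ + α f₁ R v₁` and `w = α v₁ + h w₁`, the exact
identity
`Q₂ Q₁ w = h²·[(f₂ BD + f₁ DB)w₁ + α f₁ f₂ B² v₁] + h³·f₁ f₂ B² w₁`
holds; in particular the coefficients of `h⁰` and `h¹` vanish, so `Q₂Q₁w = O(h²)`. -/
theorem EIS_double_damping_identity (s : ℕ) (hs : 1 ≤ s)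
    (D A R : Matrix (Fin s) (Fin s) ℝ) (v₁ v₂ : Fin s → ℝ)
    (hD : D * D = D) (h1 : D.mulVec v₁ = 0) (h2 : D.mulVec v₂ = 0)
    (h3 : D.mulVec ((A + R).mulVec v₁) = 0)
    (h f₁ f₂ α β : ℝ) :
    (D + (h * f₂) • (R * D + A)).mulVec
        ((D + (h * f₁) • (R * D + A)).mulVec
          (α • v₁ + h • (β • v₂ + (α * f₁) • R.mulVec v₁)))
      = h ^ 2 • ((f₂ • ((R * D + A) * D) + f₁ • (D * (R * D + A))).mulVec
              (β • v₂ + (α * f₁) • R.mulVec v₁)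
            + (α * f₁ * f₂) • ((R * D + A) * (R * D + A)).mulVec v₁)
        + h ^ 3 • ((f₁ * f₂) • ((R * D + A) * (R * D + A)).mulVec
              (β • v₂ + (α * f₁) • R.mulVec v₁)) := by
  have hA : D.mulVec (A.mulVec v₁) = - D.mulVec (R.mulVec v₁) := by
    have h3' := h3
    rw [Matrix.add_mulVec, Matrix.mulVec_add] at h3'
    linear_combination (norm := abel) h3'
  have hDD : ∀ x, D.mulVec (D.mulVec x) = D.mulVec x := by
    intro x; rw [Matrix.mulVec_mulVec, hD]
  simp only [← Matrix.mulVec_mulVec, Matrix.add_mulVec, Matrix.mulVec_add,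
    Matrix.mulVec_smul, Matrix.smul_mulVec, smul_add, smul_smul,
    h1, h2, hDD, hA, Matrix.mulVec_zero, smul_zero, add_zero, zero_add]
  module
end

section
/- Let s = 2, with coefficient matrices D = [[2,−1],[2,−1]], A = (1/12)·[[13,−14],[16,−24]], R = (1/12)·[[19,0],[24,8]], and abscissas c = (−1/2, 0)ᵀ (the A-stable implicit method iEIS+(2,3)). Then the truncation error vectors of this method satisfy: τ₀ = 0, τ₁ = 0 (order conditions with p = 1), the EIS+ conditions D τ₂ = 0, D τ₃ = 0, and D(A + R) τ₂ = 0; moreover τ₂ = (3/8, 3/4)ᵀ. -/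
/-- The truncation error vectors of the general linear method with coefficient matrices
`D, A, R` and abscissas `c`:
`τ₀ = (I - D)𝟙` and, for `j ≥ 1`,
`τ_j = (1/(j-1)!)·((1/j)·D(c-𝟙)^j + A(c-𝟙)^(j-1) + R c^(j-1) - (1/j)·c^j)`
(powers of vectors taken componentwise). -/
noncomputable def tauVec (s : ℕ) (D A R : Matrix (Fin s) (Fin s) ℝ) (c : Fin s → ℝ) :
    ℕ → (Fin s → ℝ)
  | 0 => ((fun _ => (1 : ℝ)) : Fin s → ℝ) - D.mulVec ((fun _ => (1 : ℝ)) : Fin s → ℝ)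
  | (j + 1) => (1 / (Nat.factorial j : ℝ)) •
      ((1 / ((j : ℝ) + 1)) • D.mulVec (fun i => (c i - 1) ^ (j + 1))
        + A.mulVec (fun i => (c i - 1) ^ j)
        + R.mulVec (fun i => c i ^ j)
        - (1 / ((j : ℝ) + 1)) • (fun i => c i ^ (j + 1)))

/-- Coefficient matrix `D` of the A-stable implicit method iEIS+(2,3). -/
def Di23 : Matrix (Fin 2) (Fin 2) ℝ := !![2, -1; 2, -1]

/-- Coefficient matrix `A` of the A-stable implicit method iEIS+(2,3). -/
noncomputable def Ai23 : Matrix (Fin 2) (Fin 2) ℝ := (1 / 12 : ℝ) • !![13, -14; 16, -24]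

/-- Coefficient matrix `R` of the A-stable implicit method iEIS+(2,3). -/
noncomputable def Ri23 : Matrix (Fin 2) (Fin 2) ℝ := (1 / 12 : ℝ) • !![19, 0; 24, 8]

/-- Abscissas of the A-stable implicit method iEIS+(2,3). -/
noncomputable def ci23 : Fin 2 → ℝ := ![-1 / 2, 0]

/-- **The A-stable implicit method iEIS+(2,3) satisfies the order conditions with `p = 1`
and the EIS+ conditions**: `τ₀ = τ₁ = 0`, `Dτ₂ = 0`, `Dτ₃ = 0`, `D(A+R)τ₂ = 0`; moreover
`τ₂ = (3/8, 3/4)ᵀ`. -/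
theorem iEIS23_conditions :
    tauVec 2 Di23 Ai23 Ri23 ci23 0 = 0 ∧
    tauVec 2 Di23 Ai23 Ri23 ci23 1 = 0 ∧
    Di23.mulVec (tauVec 2 Di23 Ai23 Ri23 ci23 2) = 0 ∧
    Di23.mulVec (tauVec 2 Di23 Ai23 Ri23 ci23 3) = 0 ∧
    Di23.mulVec ((Ai23 + Ri23).mulVec (tauVec 2 Di23 Ai23 Ri23 ci23 2)) = 0 ∧
    tauVec 2 Di23 Ai23 Ri23 ci23 2 = ![3 / 8, 3 / 4] := by
  refine ⟨?_, ?_, ?_, ?_, ?_, ?_⟩ <;>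
    funext i <;> fin_cases i <;>
    simp [tauVec, Di23, Ai23, Ri23, ci23, Matrix.mulVec, dotProduct,
      Fin.sum_univ_two, Nat.factorial, Matrix.vecHead, Matrix.vecTail, Function.comp, Pi.smul_apply] <;> norm_num
end

section
/- Consider the post-processing weights w = (4/15, −4/5, 4/5, 11/15) at the nodes x = (−3/2, −1, −1/2, 0) and the concatenated truncation vector τ̃ = (31/120, 62/15, 31/120, 62/15) of the parallel-efficient implicit method iEIS+(2,3). Then: (a) for every real polynomial q of degree at most 2, Σ_{i=1}^{4} w_i · q(x_i) = q(0) (equivalently Σ w_i = 1, Σ w_i x_i = 0, Σ w_i x_i² = 0); and (b) Σ_{i=1}^{4} w_i · τ̃_i = 0. Consequently, the post-processed value v̂ⁿ = (4/15)v^{n−3/2} − (4/5)v^{n−1} + (4/5)v^{n−1/2} + (11/15)v^{n} reproduces exactly, at time t_n, any function whose grid values are a polynomial of degree ≤ 2 in (t − t_n)/Δt, while annihilating the leading error direction τ̃. -/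
/-- **Properties of the post-processor of the parallel-efficient implicit method iEIS+(2,3).**
The weights `w = (4/15, -4/5, 4/5, 11/15)` at the nodes `x = (-3/2, -1, -1/2, 0)` reproduce
the value at `0` of every polynomial of degree at most `2` (equivalently `∑wᵢ = 1`,
`∑wᵢxᵢ = 0`, `∑wᵢxᵢ² = 0`), and annihilate the concatenated truncation vector
`τ̃ = (31/120, 62/15, 31/120, 62/15)`. -/
theorem iEIS23_parallel_postprocessor_properties :
    (∀ q : Polynomial ℝ, q.degree ≤ 2 →
      ∑ i : Fin 4, (![4 / 15, -4 / 5, 4 / 5, 11 / 15] : Fin 4 → ℝ) i *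
        q.eval ((![-3 / 2, -1, -1 / 2, 0] : Fin 4 → ℝ) i) = q.eval 0) ∧
    (∑ i : Fin 4, (![4 / 15, -4 / 5, 4 / 5, 11 / 15] : Fin 4 → ℝ) i = 1) ∧
    (∑ i : Fin 4, (![4 / 15, -4 / 5, 4 / 5, 11 / 15] : Fin 4 → ℝ) i *
      (![-3 / 2, -1, -1 / 2, 0] : Fin 4 → ℝ) i = 0) ∧
    (∑ i : Fin 4, (![4 / 15, -4 / 5, 4 / 5, 11 / 15] : Fin 4 → ℝ) i *
      ((![-3 / 2, -1, -1 / 2, 0] : Fin 4 → ℝ) i) ^ 2 = 0) ∧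
    (∑ i : Fin 4, (![4 / 15, -4 / 5, 4 / 5, 11 / 15] : Fin 4 → ℝ) i *
      (![31 / 120, 62 / 15, 31 / 120, 62 / 15] : Fin 4 → ℝ) i = 0) := by
  refine ⟨?_, ?_, ?_, ?_, ?_⟩
  · intro q hq
    have hnd : q.natDegree < 3 := by
      have h := Polynomial.natDegree_le_iff_degree_le.mpr hq
      exact Nat.lt_succ_of_le h
    have hev : ∀ x : ℝ, q.eval x =
        q.coeff 0 + q.coeff 1 * x + q.coeff 2 * x ^ 2 := by
      intro x
      rw [Polynomial.eval_eq_sum_range' hnd]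
      simp [Finset.sum_range_succ]
    simp only [Fin.sum_univ_four, hev, Matrix.cons_val]
    norm_num
    ring
  · simp [Fin.sum_univ_four]; norm_num
  · simp [Fin.sum_univ_four]; norm_num
  · simp [Fin.sum_univ_four]; norm_num
  · simp [Fin.sum_univ_four]; norm_num
end
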